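/- Let G be a locally finite graph, let U : E → (0,1] be injective, and let p ∈ (0,1). Then the set of edges ω_p := {e ∈ E : U(e) < p · Z_∞(e)} contains no bi-infinite simple path, where Z_∞(e) := inf over bi-infinite simple paths P in G containing e of sup{U(f) : f ∈ P \ {e}} (with Z_∞(e) := 1 if no bi-infinite simple path contains e). -/
import Mathlib


open SimpleGraph

/-- The set of edges of `G` whose endpoints cannot be joined by a path all of whose
edges have strictly smaller label: the (free) minimal spanning forest / tree of `G`. -/
def mstEdges {V α : Type*} [LinearOrder α] (G : SimpleGraph V) (U : Sym2 V → α) :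
    Set (Sym2 V) :=
  {e | e ∈ G.edgeSet ∧ ∀ a b : V, e = s(a, b) →
    ∀ p : G.Walk a b, p.IsPath → ∃ f ∈ p.edges, U e ≤ U f}

/-- A one-sided infinite simple path in `G`. -/
def IsRay {V : Type*} (G : SimpleGraph V) (r : ℕ → V) : Prop :=
  Function.Injective r ∧ ∀ n : ℕ, G.Adj (r n) (r (n + 1))

/-- The edges of a one-sided infinite path. -/
def rayEdges {V : Type*} (r : ℕ → V) : Set (Sym2 V) :=
  Set.range fun n : ℕ => s(r n, r (n + 1))

/-- The wired minimal spanning forest of `G`: edges such that every extended path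
(finite simple path, or pair of disjoint rays from the two endpoints) joining the
endpoints contains an edge of label at least as large. -/
def wmsfEdges {V : Type*} (G : SimpleGraph V) (U : Sym2 V → ℝ) : Set (Sym2 V) :=
  {e | e ∈ G.edgeSet ∧ ∀ a b : V, e = s(a, b) →
    (∀ p : G.Walk a b, p.IsPath → ∃ f ∈ p.edges, U e ≤ U f) ∧
    (∀ r₁ r₂ : ℕ → V, IsRay G r₁ → IsRay G r₂ → r₁ 0 = a → r₂ 0 = b →
      (∀ m n : ℕ, r₁ m ≠ r₂ n) →
      ∃ f ∈ rayEdges r₁ ∪ rayEdges r₂, U e ≤ U f)}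

/-- The edges of `G` joining `W` to its complement. -/
def cutEdges {V : Type*} (G : SimpleGraph V) (W : Set V) : Set (Sym2 V) :=
  {e | e ∈ G.edgeSet ∧ ∃ a b : V, e = s(a, b) ∧ a ∈ W ∧ b ∉ W}

/-- A bi-infinite simple path in `G`. -/
def IsBiRay {V : Type*} (G : SimpleGraph V) (r : ℤ → V) : Prop :=
  Function.Injective r ∧ ∀ n : ℤ, G.Adj (r n) (r (n + 1))

/-- The edges of a bi-infinite simple path. -/
def biRayEdges {V : Type*} (r : ℤ → V) : Set (Sym2 V) :=
  Set.range fun n : ℤ => s(r n, r (n + 1))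

open scoped Classical in
/-- `Z_∞(e)`: the infimum over bi-infinite simple paths `P` containing `e` of
`sup {U(f) : f ∈ P \ {e}}`; defined to be `1` if no bi-infinite simple path
contains `e`. -/
noncomputable def Zinf {V : Type*} (G : SimpleGraph V) (U : Sym2 V → ℝ) (e : Sym2 V) : ℝ :=
  if ∃ r : ℤ → V, IsBiRay G r ∧ e ∈ biRayEdges r then
    sInf {x : ℝ | ∃ r : ℤ → V, IsBiRay G r ∧ e ∈ biRayEdges r ∧
      x = sSup {y : ℝ | ∃ f ∈ biRayEdges r \ {e}, y = U f}}
  else 1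

lemma biRay_edge_mem_edgeSet {V : Type*} {G : SimpleGraph V} {r : ℤ → V}
    (hr : IsBiRay G r) {f : Sym2 V} (hf : f ∈ biRayEdges r) : f ∈ G.edgeSet := by
  obtain ⟨n, rfl⟩ := hf
  exact hr.2 n

lemma biRay_diff_nonempty {V : Type*} {r : ℤ → V} (hr : Function.Injective r)
    (e : Sym2 V) : (biRayEdges r \ {e}).Nonempty := by
  have h01 : s(r 0, r (0 + 1)) ≠ s(r 1, r (1 + 1)) := by
    intro h
    rw [Sym2.eq_iff] at h
    rcases h with ⟨h1, _⟩ | ⟨h1, _⟩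
    · exact (by norm_num : (0 : ℤ) ≠ 1) (hr h1)
    · exact (by norm_num : (0 : ℤ) ≠ 1 + 1) (hr h1)
  by_cases he : e = s(r 0, r (0 + 1))
  · exact ⟨s(r 1, r (1 + 1)), ⟨1, rfl⟩, fun h => h01 (he ▸ (Set.mem_singleton_iff.mp h).symm)⟩
  · exact ⟨s(r 0, r (0 + 1)), ⟨0, rfl⟩, fun h => he (Set.mem_singleton_iff.mp h).symm⟩

/-- For an injective labeling `U : E → (0,1]` of a locally finite
graph and `p ∈ (0,1)`, the set `ω_p = {e : U(e) < p·Z_∞(e)}` contains no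
bi-infinite simple path. -/
theorem stmt14 {V : Type*} (G : SimpleGraph V)
    (hlf : ∀ v : V, (G.neighborSet v).Finite)
    (U : Sym2 V → ℝ) (hU : Set.InjOn U G.edgeSet)
    (hU01 : ∀ e ∈ G.edgeSet, U e ∈ Set.Ioc (0 : ℝ) 1)
    (p : ℝ) (hp : p ∈ Set.Ioo (0 : ℝ) 1) :
    ¬ ∃ r : ℤ → V, IsBiRay G r ∧
        biRayEdges r ⊆ {e : Sym2 V | e ∈ G.edgeSet ∧ U e < p * Zinf G U e} := by
  rintro ⟨r, hr, hsub⟩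
  have hEedge : ∀ f ∈ biRayEdges r, f ∈ G.edgeSet := fun f hf => biRay_edge_mem_edgeSet hr hf
  have hUE : ∀ f ∈ biRayEdges r, U f ∈ Set.Ioc (0 : ℝ) 1 := fun f hf => hU01 f (hEedge f hf)
  have hEne : (biRayEdges r).Nonempty := ⟨_, ⟨0, rfl⟩⟩
  have hbdd : BddAbove (U '' biRayEdges r) := by
    refine ⟨1, ?_⟩
    rintro y ⟨f, hf, rfl⟩
    exact (hUE f hf).2
  set M := sSup (U '' biRayEdges r) with hM
  have hle : ∀ f ∈ biRayEdges r, U f ≤ M := fun f hf => le_csSup hbdd ⟨f, hf, rfl⟩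
  have hZ : ∀ e ∈ biRayEdges r, Zinf G U e ≤ M := by
    intro e he
    have hex : ∃ r' : ℤ → V, IsBiRay G r' ∧ e ∈ biRayEdges r' := ⟨r, hr, he⟩
    rw [Zinf, if_pos hex]
    have hx0mem : sSup {y : ℝ | ∃ f ∈ biRayEdges r \ {e}, y = U f} ∈
        {x : ℝ | ∃ r' : ℤ → V, IsBiRay G r' ∧ e ∈ biRayEdges r' ∧
          x = sSup {y : ℝ | ∃ f ∈ biRayEdges r' \ {e}, y = U f}} := ⟨r, hr, he, rfl⟩
    have hbelow : BddBelow {x : ℝ | ∃ r' : ℤ → V, IsBiRay G r' ∧ e ∈ biRayEdges r' ∧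
        x = sSup {y : ℝ | ∃ f ∈ biRayEdges r' \ {e}, y = U f}} := by
      refine ⟨0, ?_⟩
      rintro x ⟨r', hr', _, rfl⟩
      obtain ⟨f, hf, hfe⟩ := biRay_diff_nonempty hr'.1 e
      have hfU : U f ∈ Set.Ioc (0 : ℝ) 1 := hU01 f (biRay_edge_mem_edgeSet hr' hf)
      have hbdd' : BddAbove {y : ℝ | ∃ f ∈ biRayEdges r' \ {e}, y = U f} := by
        refine ⟨1, ?_⟩
        rintro y ⟨g, ⟨hg, _⟩, rfl⟩
        exact (hU01 g (biRay_edge_mem_edgeSet hr' hg)).2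
      have := le_csSup hbdd' (⟨f, ⟨hf, hfe⟩, rfl⟩ :
        U f ∈ {y : ℝ | ∃ f ∈ biRayEdges r' \ {e}, y = U f})
      linarith [hfU.1]
    refine le_trans (csInf_le hbelow hx0mem) ?_
    obtain ⟨f, hf, hfe⟩ := biRay_diff_nonempty hr.1 e
    refine csSup_le ⟨U f, f, ⟨hf, hfe⟩, rfl⟩ ?_
    rintro y ⟨g, ⟨hg, _⟩, rfl⟩
    exact hle g hg
  have hkey : ∀ f ∈ biRayEdges r, U f ≤ p * M := by
    intro f hf
    have h1 : U f < p * Zinf G U f := (hsub hf).2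
    have h2 : p * Zinf G U f ≤ p * M := by
      have := hZ f hf
      nlinarith [hp.1]
    linarith
  have hMle : M ≤ p * M := by
    refine csSup_le (hEne.image U) ?_
    rintro y ⟨f, hf, rfl⟩
    exact hkey f hf
  obtain ⟨f0, hf0⟩ := hEne
  have hpos : (0 : ℝ) < U f0 := (hUE f0 hf0).1
  have : (0 : ℝ) < M := lt_of_lt_of_le hpos (hle f0 hf0)
  nlinarith [hp.2]
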